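/- Let I be a finite independence system, w a nonnegative weight function, K = {|S| : S ∈ I}, and λ a probability distribution on I that is α-robust (i.e., E_{S∼λ}[w(S_k)] ≥ α·OPT_k for all k ∈ K). Then for every probability distribution μ on K there exists S in the support of λ with Σ_{k∈K} μ_k w(S_k) ≥ α · max over S* ∈ I of Σ_{k∈K} μ_k w(S*_k). -/

import Mathlib

/-- The weights of the elements of `S`, sorted in decreasing order. -/
noncomputable def sortedDesc {E : Type*} (w : E → ℝ) (S : Finset E) : List ℝ :=
  (S.val.map w).sort (· ≥ ·)

/-- `w(S_k)`: the total weight of the `k` heaviest elements of `S`. -/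
noncomputable def wTop {E : Type*} (w : E → ℝ) (k : ℕ) (S : Finset E) : ℝ :=
  ((sortedDesc w S).take k).sum

/-- If `λ` is an `α`-robust probability distribution on the independent sets of a finite
independence system, then for every probability distribution `μ` on `K = {|S| : S ∈ I}`
there is an `S` in the support of `λ` with
`∑_k μ_k w(S_k) ≥ α · max_{S* ∈ I} ∑_k μ_k w(S*_k)`. -/
lemma le_map_lift {E : Type*} [DecidableEq E] (w : E → ℝ) :
    ∀ (s : Multiset ℝ) (t : Multiset E), s ≤ t.map w → ∃ u ≤ t, u.map w = s := by
  intro s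
  induction s using Multiset.induction_on with
  | empty => exact fun t _ => ⟨0, Multiset.zero_le t, rfl⟩
  | cons a s ih =>
    intro t h
    have ha : a ∈ t.map w := Multiset.mem_of_le h (Multiset.mem_cons_self a s)
    obtain ⟨e, he, rfl⟩ := Multiset.mem_map.mp ha
    have ht : t = e ::ₘ t.erase e := (Multiset.cons_erase he).symm
    have hs : s ≤ (t.erase e).map w := by
      have := Multiset.erase_le_erase (w e) h
      rwa [Multiset.erase_cons_head, ht, Multiset.map_cons, Multiset.erase_cons_head] at this
    obtain ⟨u, hu, hmap⟩ := ih (t.erase e) hs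
    exact ⟨e ::ₘ u, by rw [ht]; exact Multiset.cons_le_cons e hu,
      by rw [Multiset.map_cons, hmap]⟩

lemma wTop_nonneg {E : Type*} (w : E → ℝ) (hw : ∀ e, 0 ≤ w e) (k : ℕ) (S : Finset E) :
    0 ≤ wTop w k S := by
  apply List.sum_nonneg
  intro x hx
  have : x ∈ sortedDesc w S := List.mem_of_mem_take hx
  have : x ∈ (S.val.map w) := by
    rwa [sortedDesc, ← Multiset.mem_coe, Multiset.sort_eq] at this
  obtain ⟨e, _, rfl⟩ := Multiset.mem_map.mp this
  exact hw e

lemma wTop_exists_subset {E : Type*} [DecidableEq E] (w : E → ℝ) (k : ℕ) (S : Finset E) :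
    ∃ T ⊆ S, T.card ≤ k ∧ ∑ e ∈ T, w e = wTop w k S := by
  have hsub : (↑((sortedDesc w S).take k) : Multiset ℝ) ≤ S.val.map w := by
    calc (↑((sortedDesc w S).take k) : Multiset ℝ) ≤ ↑(sortedDesc w S) :=
      Multiset.coe_le.mpr (List.take_sublist k _).subperm
    _ = S.val.map w := Multiset.sort_eq _ _
  obtain ⟨u, hu, hmap⟩ := le_map_lift w _ _ hsub
  have hnd : u.Nodup := Multiset.nodup_of_le hu S.nodup
  refine ⟨⟨u, hnd⟩, ?_, ?_, ?_⟩
  · exact fun x hx => Multiset.mem_of_le hu hx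
  · have : u.card = ((sortedDesc w S).take k).length := by
      rw [← Multiset.card_map w u, hmap]; simp
    simp only [Finset.card_mk, this]
    exact List.length_take.trans_le (min_le_left _ _)
  · show (u.map w).sum = wTop w k S
    rw [hmap]; rfl

theorem stmt_14 {E : Type*} [Fintype E] [DecidableEq E]
    (I : Finset E → Prop) [DecidablePred I]
    (hne : I ∅) (hdc : ∀ S T : Finset E, S ⊆ T → I T → I S)
    (w : E → ℝ) (hw : ∀ e, 0 ≤ w e)
    (K : Finset ℕ) (hK : K = (Finset.univ.filter I).image Finset.card)
    (OPT : ℕ → ℝ)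
    (hOPT : ∀ k, IsGreatest
      {x : ℝ | ∃ T : Finset E, I T ∧ T.card ≤ k ∧ x = ∑ e ∈ T, w e} (OPT k))
    (α : ℝ) (lam : Finset E → ℝ)
    (hlam0 : ∀ S, 0 ≤ lam S) (hlam1 : ∑ S : Finset E, lam S = 1)
    (hsupp : ∀ S, 0 < lam S → I S)
    (hrobust : ∀ k ∈ K, α * OPT k ≤ ∑ S : Finset E, lam S * wTop w k S)
    (μ : ℕ → ℝ) (hμ0 : ∀ k ∈ K, 0 ≤ μ k) (hμ1 : ∑ k ∈ K, μ k = 1) :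
    ∃ S : Finset E, 0 < lam S ∧ ∀ S' : Finset E, I S' →
      α * ∑ k ∈ K, μ k * wTop w k S' ≤ ∑ k ∈ K, μ k * wTop w k S := by
  classical
  set f : Finset E → ℝ := fun S => ∑ k ∈ K, μ k * wTop w k S with hf
  -- the support of lam is nonempty
  have hsne : (Finset.univ.filter fun S : Finset E => 0 < lam S).Nonempty := by
    by_contra h
    rw [Finset.not_nonempty_iff_eq_empty] at h
    have : ∑ S : Finset E, lam S = 0 := by
      apply Finset.sum_eq_zero
      intro S _
      by_contra hS
      have : 0 < lam S := lt_of_le_of_ne (hlam0 S) (Ne.symm hS)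
      have : S ∈ Finset.univ.filter fun S : Finset E => 0 < lam S := by
        simp [this]
      simp [h] at this
    linarith [hlam1]
  obtain ⟨S, hSmem, hSmax⟩ := Finset.exists_max_image _ f hsne
  have hSpos : 0 < lam S := (Finset.mem_filter.mp hSmem).2
  refine ⟨S, hSpos, ?_⟩
  intro S' hS'
  -- E[f] ≤ f S
  have hEf : ∑ T : Finset E, lam T * f T ≤ f S := by
    calc ∑ T : Finset E, lam T * f T ≤ ∑ T : Finset E, lam T * f S := by
          apply Finset.sum_le_sum
          intro T _
          rcases lt_or_eq_of_le (hlam0 T) with hT | hT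
          · exact mul_le_mul_of_nonneg_left (hSmax T (by simp [hT])) (le_of_lt hT)
          · simp [← hT]
    _ = f S := by rw [← Finset.sum_mul, hlam1, one_mul]
  have hEf_eq : ∑ T : Finset E, lam T * f T
      = ∑ k ∈ K, μ k * ∑ T : Finset E, lam T * wTop w k T := by
    simp only [hf, Finset.mul_sum]
    rw [Finset.sum_comm]
    apply Finset.sum_congr rfl
    intro k _
    exact Finset.sum_congr rfl fun T _ => by ring
  -- wTop of S' is at most OPT k
  have hle : ∀ k ∈ K, wTop w k S' ≤ OPT k := by
    intro k _
    obtain ⟨T, hTsub, hTcard, hTsum⟩ := wTop_exists_subset w k S'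
    rw [← hTsum]
    exact (hOPT k).2 ⟨T, hdc T S' hTsub hS', hTcard, rfl⟩
  rcases le_or_gt 0 α with hα | hα
  · calc α * ∑ k ∈ K, μ k * wTop w k S'
        = ∑ k ∈ K, μ k * (α * wTop w k S') := by rw [Finset.mul_sum]; exact Finset.sum_congr rfl fun k _ => by ring
      _ ≤ ∑ k ∈ K, μ k * ∑ T : Finset E, lam T * wTop w k T := by
          apply Finset.sum_le_sum
          intro k hk
          exact mul_le_mul_of_nonneg_left
            ((mul_le_mul_of_nonneg_left (hle k hk) hα).trans (hrobust k hk)) (hμ0 k hk)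
      _ = ∑ T : Finset E, lam T * f T := hEf_eq.symm
      _ ≤ f S := hEf
  · have h1 : α * ∑ k ∈ K, μ k * wTop w k S' ≤ 0 := by
      apply mul_nonpos_of_nonpos_of_nonneg hα.le
      exact Finset.sum_nonneg fun k hk => mul_nonneg (hμ0 k hk) (wTop_nonneg w hw k S')
    have h2 : (0:ℝ) ≤ ∑ T : Finset E, lam T * f T := by
      apply Finset.sum_nonneg
      intro T _
      exact mul_nonneg (hlam0 T) (Finset.sum_nonneg fun k hk => mul_nonneg (hμ0 k hk) (wTop_nonneg w hw k T))
    exact h1.trans (h2.trans hEf)
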